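/- Let f = (f_0, …, f_n) : Δ → ℝ^{n+1} be uniformly continuous and satisfy the Walras law, and let φ : Δ → Δ be defined by φ_i(p) = (p_i + max(f_i(p), 0)) / (1 + Σ_{j=0}^n max(f_j(p), 0)). If (p_k)_{k≥1} is a sequence in Δ with |φ(p_k) − p_k| → 0 as k → ∞, then max(f_i(p_k), 0) → 0 as k → ∞ for every i = 0, 1, …, n. -/

import Mathlib

open Filter Topology

noncomputable section

/-- The ambient Euclidean space `ℝ^{n+1}`. -/
abbrev E (n : ℕ) := EuclideanSpace ℝ (Fin (n + 1))

/-- The standard `n`-dimensional simplex in `ℝ^{n+1}` with the Euclidean metric. -/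
def simplexE (n : ℕ) : Set (E n) := {p | (∀ i, 0 ≤ p i) ∧ ∑ i, p i = 1}

lemma coord_abs_le_norm {n : ℕ} (x : E n) (i : Fin (n + 1)) : |x i| ≤ ‖x‖ := by
  rw [EuclideanSpace.norm_eq]
  have h1 : |x i| = Real.sqrt (‖x i‖ ^ 2) := by
    rw [Real.sqrt_sq_eq_abs]; simp [Real.norm_eq_abs, abs_abs]
  rw [h1]
  apply Real.sqrt_le_sqrt
  exact Finset.single_le_sum (f := fun j => ‖x j‖ ^ 2) (fun j _ => sq_nonneg _) (Finset.mem_univ i)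

/-- Let `f` be uniformly continuous and satisfy the Walras law, and let
`φ_i(p) = (p_i + max(f_i(p), 0)) / (1 + Σ_j max(f_j(p), 0))`.  If `(p_k)` is a sequence
in the simplex with `|φ(p_k) − p_k| → 0`, then `max(f_i(p_k), 0) → 0` for every `i`. -/
theorem approx_fixed_implies_approx_equilibrium (n : ℕ) (f : E n → E n)
    (huc : UniformContinuousOn f (simplexE n))
    (hwalras : ∀ p ∈ simplexE n, ∑ i, p i * f p i = 0)
    (φ : E n → E n)
    (hφ : ∀ p i, φ p i = (p i + max (f p i) 0) / (1 + ∑ j, max (f p j) 0))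
    (p : ℕ → E n) (hpΔ : ∀ k, p k ∈ simplexE n)
    (hconv : Tendsto (fun k => dist (φ (p k)) (p k)) atTop (nhds 0)) :
    ∀ i, Tendsto (fun k => max (f (p k) i) 0) atTop (nhds 0) := by
  have hcomp : IsCompact (simplexE n) := by
    have : simplexE n = (EuclideanSpace.equiv (Fin (n+1)) ℝ).symm '' (stdSimplex ℝ (Fin (n+1))) := by
      ext q
      constructor
      · intro h; exact ⟨q, h, rfl⟩
      · rintro ⟨q', hq, rfl⟩; exact hq
    rw [this]
    exact (isCompact_stdSimplex _ _).image (EuclideanSpace.equiv (Fin (n+1)) ℝ).symm.continuous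
  have hcont : ContinuousOn f (simplexE n) := huc.continuousOn
  obtain ⟨M, hM⟩ := hcomp.exists_bound_of_continuousOn hcont
  have hM0 : 0 ≤ M := le_trans (norm_nonneg _) (hM _ (hpΔ 0))
  set g : ℕ → Fin (n + 1) → ℝ := fun k i => max (f (p k) i) 0 with hgdef
  set T : ℕ → ℝ := fun k => ∑ j, g k j with hTdef
  have hg0 : ∀ k i, 0 ≤ g k i := fun k i => le_max_right _ _
  have hgM : ∀ k i, g k i ≤ M := by
    intro k i
    apply max_le _ hM0
    exact le_trans (le_abs_self _) (le_trans (coord_abs_le_norm _ i) (hM _ (hpΔ k)))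
  have hT0 : ∀ k, 0 ≤ T k := fun k => Finset.sum_nonneg fun j _ => hg0 k j
  have hTle : ∀ k, T k ≤ (n + 1) * M := by
    intro k
    calc T k ≤ ∑ _j : Fin (n+1), M := Finset.sum_le_sum fun j _ => hgM k j
    _ = (n + 1) * M := by simp [mul_comm]
  have hS : ∀ k, 0 < 1 + T k := fun k => by linarith [hT0 k]
  -- key identity
  have hkey : ∀ k, ∑ i, g k i ^ 2 = (1 + T k) * ∑ i, f (p k) i * (φ (p k) i - p k i) := by
    intro k
    have hd : ∀ i, φ (p k) i - p k i = (g k i - p k i * T k) / (1 + T k) := by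
      intro i
      rw [hφ]
      have hne := (hS k).ne'
      simp only [hTdef, hgdef] at hne ⊢
      field_simp
      ring
    have hfg : ∀ i, f (p k) i * g k i = g k i ^ 2 := by
      intro i
      rcases le_or_gt 0 (f (p k) i) with h | h
      · simp [hgdef, max_eq_left h]; ring
      · simp [hgdef, max_eq_right h.le]
    calc ∑ i, g k i ^ 2
        = ∑ i, f (p k) i * g k i := by
          exact Finset.sum_congr rfl fun i _ => (hfg i).symm
      _ = ∑ i, f (p k) i * g k i - T k * ∑ i, p k i * f (p k) i := by
          rw [hwalras _ (hpΔ k)]; ring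
      _ = ∑ i, (f (p k) i * g k i - T k * (p k i * f (p k) i)) := by
          rw [Finset.sum_sub_distrib, Finset.mul_sum]
      _ = (1 + T k) * ∑ i, f (p k) i * (g k i - p k i * T k) / (1 + T k) := by
          rw [Finset.mul_sum]
          apply Finset.sum_congr rfl
          intro i _
          have hne := (hS k).ne'
          field_simp
      _ = (1 + T k) * ∑ i, f (p k) i * (φ (p k) i - p k i) := by
          congr 1
          apply Finset.sum_congr rfl
          intro i _
          rw [hd i, mul_div_assoc]
  have hdistb : ∀ (k : ℕ) (i : Fin (n+1)), |φ (p k) i - p k i| ≤ dist (φ (p k)) (p k) := by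
    intro k i
    have h : φ (p k) i - p k i = (φ (p k) - p k) i := rfl
    rw [h, dist_eq_norm]
    exact coord_abs_le_norm _ i
  have hfb : ∀ (k : ℕ) (i : Fin (n+1)), |f (p k) i| ≤ M :=
    fun k i => (coord_abs_le_norm _ i).trans (hM _ (hpΔ k))
  have hsum_nonneg : ∀ k, 0 ≤ ∑ i, f (p k) i * (φ (p k) i - p k i) := by
    intro k
    have h1 : 0 ≤ ∑ i, g k i ^ 2 := Finset.sum_nonneg fun i _ => sq_nonneg _
    nlinarith [hkey k, hS k]
  have hbound : ∀ k, ∑ i, g k i ^ 2 ≤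
      (1 + (n+1) * M) * ((n+1) * (M * dist (φ (p k)) (p k))) := by
    intro k
    rw [hkey k]
    have h1 : ∑ i, f (p k) i * (φ (p k) i - p k i) ≤ (n+1) * (M * dist (φ (p k)) (p k)) := by
      calc ∑ i, f (p k) i * (φ (p k) i - p k i)
          ≤ ∑ _i : Fin (n+1), M * dist (φ (p k)) (p k) := by
            apply Finset.sum_le_sum
            intro i _
            calc f (p k) i * (φ (p k) i - p k i)
                ≤ |f (p k) i * (φ (p k) i - p k i)| := le_abs_self _
              _ = |f (p k) i| * |φ (p k) i - p k i| := abs_mul _ _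
              _ ≤ M * dist (φ (p k)) (p k) :=
                  mul_le_mul (hfb k i) (hdistb k i) (abs_nonneg _) hM0
        _ = (n+1) * (M * dist (φ (p k)) (p k)) := by
            rw [Finset.sum_const, Finset.card_univ, Fintype.card_fin, nsmul_eq_mul]
            push_cast; ring
    have h2 : 1 + T k ≤ 1 + (n+1) * M := by linarith [hTle k]
    exact mul_le_mul h2 h1 (hsum_nonneg k) (by positivity)
  have hCconv : Tendsto (fun k => (1 + (n+1) * M) * ((n+1) * (M * dist (φ (p k)) (p k))))
      atTop (nhds 0) := by
    have h := ((hconv.const_mul M).const_mul ((n : ℝ) + 1)).const_mul (1 + (n+1) * M)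
    simpa using h
  intro i
  have hsq : Tendsto (fun k => g k i ^ 2) atTop (nhds 0) := by
    apply squeeze_zero (fun k => sq_nonneg _) _ hCconv
    intro k
    exact le_trans (Finset.single_le_sum (f := fun j => g k j ^ 2)
      (fun j _ => sq_nonneg _) (Finset.mem_univ i)) (hbound k)
  have hfin : Tendsto (fun k => Real.sqrt (g k i ^ 2)) atTop (nhds (Real.sqrt 0)) := hsq.sqrt
  have heq : (fun k => Real.sqrt (g k i ^ 2)) = fun k => g k i :=
    funext fun k => Real.sqrt_sq (hg0 k i)
  rw [heq] at hfin
  simpa using hfin
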